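/- Let m ≥ 2 and 1 ≤ k < m. Let (θ*_j)_{j∈[m]} be real numbers, let T* ⊆ [m] with |T*| = k be a set such that θ*_{j₁} − θ*_{j₂} ≥ δ > 0 for every j₁ ∈ T* and j₂ ∉ T*. Let (θ̂_j)_{j∈[m]} be independent random variables with θ̂_j ~ N(θ*_j, σ_j²) and σ_j² ≤ σ̃² for all j. Let T̂ be any set of k indices with the k largest values of θ̂ (ties broken arbitrarily). Then P(T̂ ≠ T*) ≤ k(m−k)·exp(−δ²/(4σ̃²)). -/

import Mathlib

open MeasureTheory ProbabilityTheory
open scoped NNReal ENNReal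

open Real

lemma gpdf_mul_exp (μ t : ℝ) {v : ℝ≥0} (hv : v ≠ 0) (x : ℝ) :
    gaussianPDFReal μ v x * rexp (t * x)
      = rexp (μ * t + v * t ^ 2 / 2) * gaussianPDFReal (μ + v * t) v x := by
  have hv' : (0:ℝ) < v := by exact_mod_cast zero_lt_iff.mpr hv
  have h2v : (2 : ℝ) * v ≠ 0 := by positivity
  have key : rexp (-(x - μ) ^ 2 / (2 * (v:ℝ))) * rexp (t * x)
      = rexp (μ * t + (v:ℝ) * t ^ 2 / 2) * rexp (-(x - (μ + (v:ℝ) * t)) ^ 2 / (2 * (v:ℝ))) := by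
    rw [← Real.exp_add, ← Real.exp_add]
    congr 1
    field_simp
    ring
  unfold gaussianPDFReal
  linear_combination (√(2 * π * (v:ℝ)))⁻¹ * key

lemma integrable_exp_mul_gaussianReal (μ : ℝ) (v : ℝ≥0) (t : ℝ) :
    Integrable (fun x => rexp (t * x)) (gaussianReal μ v) := by
  by_cases hv : v = 0
  · subst hv
    rw [gaussianReal_zero_var]
    refine ⟨(Continuous.aestronglyMeasurable (by fun_prop)), ?_⟩
    rw [HasFiniteIntegral, lintegral_dirac]
    exact ENNReal.coe_lt_top
  · rw [gaussianReal_of_var_ne_zero _ hv, gaussianPDF_def]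
    rw [integrable_withDensity_iff ((measurable_gaussianPDFReal μ v).ennreal_ofReal)
      (Filter.Eventually.of_forall fun x => ENNReal.ofReal_lt_top)]
    have : (fun x => rexp (t * x) * (ENNReal.ofReal (gaussianPDFReal μ v x)).toReal)
        = fun x => rexp (μ * t + v * t ^ 2 / 2) * gaussianPDFReal (μ + v * t) v x := by
      ext x
      rw [ENNReal.toReal_ofReal (gaussianPDFReal_nonneg μ v x), mul_comm,
        gpdf_mul_exp μ t hv x]
    rw [this]
    exact (integrable_gaussianPDFReal _ _).const_mul _

lemma integral_exp_mul_gaussianReal (μ : ℝ) (v : ℝ≥0) (t : ℝ) :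
    ∫ x, rexp (t * x) ∂(gaussianReal μ v) = rexp (μ * t + v * t ^ 2 / 2) := by
  by_cases hv : v = 0
  · subst hv
    rw [gaussianReal_zero_var, integral_dirac]
    norm_num [mul_comm]
  · rw [gaussianReal_of_var_ne_zero _ hv, gaussianPDF_def]
    have hd : (fun x => ENNReal.ofReal (gaussianPDFReal μ v x))
        = fun x => ((gaussianPDFReal μ v x).toNNReal : ℝ≥0∞) := rfl
    rw [hd, integral_withDensity_eq_integral_smul
      ((measurable_gaussianPDFReal μ v).real_toNNReal) _]
    have : (fun x => (gaussianPDFReal μ v x).toNNReal • rexp (t * x))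
        = fun x => rexp (μ * t + v * t ^ 2 / 2) * gaussianPDFReal (μ + v * t) v x := by
      ext x
      rw [NNReal.smul_def, smul_eq_mul, Real.coe_toNNReal _ (gaussianPDFReal_nonneg μ v x),
        gpdf_mul_exp μ t hv x]
    rw [this, integral_const_mul, integral_gaussianPDFReal_eq_one _ hv, mul_one]

/-- Lemma 1 (upper bound on top-k recovery error): with independent Gaussian estimated
scores `θ̂_j ~ N(θ*_j, σ_j²)`, `σ_j² ≤ σ̃²`, and a true top-`k` set `T*` separated by a
gap `δ > 0`, any selection `T̂` of `k` indices with the `k` largest estimated scores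
satisfies `P(T̂ ≠ T*) ≤ k(m−k)·exp(−δ²/(4σ̃²))`. -/
theorem stmt6 {Ω : Type*} [MeasureSpace Ω] [IsProbabilityMeasure (ℙ : Measure Ω)]
    (m k : ℕ) (hm : 2 ≤ m) (hk : 1 ≤ k) (hkm : k < m)
    (θstar : Fin m → ℝ) (Tstar : Finset (Fin m)) (hTcard : Tstar.card = k)
    (δ : ℝ) (hδ : 0 < δ)
    (hsep : ∀ j₁ ∈ Tstar, ∀ j₂ ∉ Tstar, δ ≤ θstar j₁ - θstar j₂)
    (θhat : Fin m → Ω → ℝ) (v : Fin m → ℝ≥0) (vmax : ℝ≥0)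
    (hind : iIndepFun θhat ℙ)
    (hdist : ∀ j, Measure.map (θhat j) ℙ = gaussianReal (θstar j) (v j))
    (hvar : ∀ j, v j ≤ vmax)
    (That : Ω → Finset (Fin m))
    (hThatCard : ∀ ω, (That ω).card = k)
    (hThatTop : ∀ ω, ∀ j₁ ∈ That ω, ∀ j₂ ∉ That ω, θhat j₂ ω ≤ θhat j₁ ω) :
    ℙ {ω | That ω ≠ Tstar} ≤
      ENNReal.ofReal ((k : ℝ) * (m - k) *
        Real.exp (-δ ^ 2 / (4 * (vmax : ℝ)))) := by
  classical
  have hk1 : (1:ℝ) ≤ (k:ℝ) := by exact_mod_cast hk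
  have hmk1 : (1:ℝ) ≤ (m:ℝ) - k := by
    have : (k:ℝ) + 1 ≤ (m:ℝ) := by exact_mod_cast hkm
    linarith
  set C : ℝ := Real.exp (-δ ^ 2 / (4 * (vmax : ℝ))) with hCdef
  by_cases hvm : vmax = 0
  · have hC1 : C = 1 := by simp [hCdef, hvm]
    calc ℙ {ω | That ω ≠ Tstar} ≤ 1 := prob_le_one
      _ = ENNReal.ofReal 1 := by simp
      _ ≤ _ := by
          apply ENNReal.ofReal_le_ofReal
          rw [hC1, mul_one]
          nlinarith
  · have hvm' : (0:ℝ) < (vmax:ℝ) := by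
      exact_mod_cast zero_lt_iff.mpr hvm
    -- basic measurability and integrability facts
    have ham : ∀ j, AEMeasurable (θhat j) ℙ := by
      intro j
      refine aemeasurable_of_map_neZero ⟨?_⟩
      rw [hdist j]
      exact IsProbabilityMeasure.ne_zero _
    have hcont : ∀ s : ℝ, Continuous fun x : ℝ => rexp (s * x) := fun s => by fun_prop
    have hint : ∀ (j) (s : ℝ), Integrable (fun ω => rexp (s * θhat j ω)) ℙ := by
      intro j s
      have h := integrable_exp_mul_gaussianReal (θstar j) (v j) s
      rw [← hdist j] at h
      exact (integrable_map_measure (hcont s).aestronglyMeasurable (ham j)).mp h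
    have hmgf : ∀ (j) (s : ℝ),
        mgf (θhat j) ℙ s = rexp (θstar j * s + (v j : ℝ) * s ^ 2 / 2) := by
      intro j s
      rw [mgf, ← integral_exp_mul_gaussianReal (θstar j) (v j) s, ← hdist j,
        integral_map (ham j) (hcont s).aestronglyMeasurable]
    -- pairwise bound
    set t : ℝ := δ / (2 * (vmax:ℝ)) with htdef
    have ht : 0 < t := by positivity
    have pair : ∀ j₁ ∈ Tstar, ∀ j₂ ∉ Tstar,
        ℙ {ω | θhat j₁ ω ≤ θhat j₂ ω} ≤ ENNReal.ofReal C := by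
      intro j₁ hj₁ j₂ hj₂
      have hne : j₂ ≠ j₁ := fun h => hj₂ (h ▸ hj₁)
      have hindep : IndepFun (θhat j₂) (-θhat j₁) ℙ :=
        (hind.indepFun hne).comp measurable_id measurable_neg
      have hintneg : Integrable (fun ω => rexp (t * (-θhat j₁) ω)) ℙ := by
        simpa [Pi.neg_apply, mul_neg, neg_mul] using hint j₁ (-t)
      have h_int_sum : Integrable (fun ω => rexp (t * (θhat j₂ + -θhat j₁) ω)) ℙ :=
        hindep.integrable_exp_mul_add (hint j₂ t) hintneg
      have hch := measure_ge_le_exp_mul_mgf (X := θhat j₂ + -θhat j₁) (μ := ℙ) 0 ht.le h_int_sum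
      have hmgf_add : mgf (θhat j₂ + -θhat j₁) ℙ t
          = mgf (θhat j₂) ℙ t * mgf (θhat j₁) ℙ (-t) := by
        rw [hindep.mgf_add (hint j₂ t).aestronglyMeasurable hintneg.aestronglyMeasurable, mgf_neg]
      have hbound : mgf (θhat j₂) ℙ t * mgf (θhat j₁) ℙ (-t) ≤ C := by
        rw [hmgf j₂ t, hmgf j₁ (-t), ← Real.exp_add, hCdef]
        apply Real.exp_le_exp.mpr
        have hsep' : δ ≤ θstar j₁ - θstar j₂ := hsep j₁ hj₁ j₂ hj₂
        have hv₁ : (v j₁ : ℝ) ≤ (vmax:ℝ) := by exact_mod_cast hvar j₁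
        have hv₂ : (v j₂ : ℝ) ≤ (vmax:ℝ) := by exact_mod_cast hvar j₂
        have ht2 : (0:ℝ) ≤ t ^ 2 := sq_nonneg t
        calc θstar j₂ * t + (v j₂:ℝ) * t ^ 2 / 2 + (θstar j₁ * (-t) + (v j₁:ℝ) * (-t) ^ 2 / 2)
            = (θstar j₂ - θstar j₁) * t + ((v j₁:ℝ) + (v j₂:ℝ)) * (t ^ 2 / 2) := by ring
          _ ≤ (-δ) * t + (2 * (vmax:ℝ)) * (t ^ 2 / 2) := by
              gcongr
              · nlinarith
              · linarith
          _ = -δ ^ 2 / (4 * (vmax:ℝ)) := by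
              rw [htdef]
              field_simp
              ring
      have hset : {ω | θhat j₁ ω ≤ θhat j₂ ω} = {ω | (0:ℝ) ≤ (θhat j₂ + -θhat j₁) ω} := by
        ext ω
        simp [Pi.add_apply, Pi.neg_apply, ← sub_eq_add_neg, sub_nonneg]
      rw [hset, ← ENNReal.ofReal_toReal (measure_ne_top ℙ _)]
      apply ENNReal.ofReal_le_ofReal
      calc (ℙ {ω | (0:ℝ) ≤ (θhat j₂ + -θhat j₁) ω}).toReal
          ≤ rexp (-t * 0) * mgf (θhat j₂ + -θhat j₁) ℙ t := hch
        _ = mgf (θhat j₂) ℙ t * mgf (θhat j₁) ℙ (-t) := by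
            rw [hmgf_add]; simp
        _ ≤ C := hbound
    -- union bound
    have hsub : {ω | That ω ≠ Tstar} ⊆
        ⋃ p ∈ (Tstar ×ˢ Tstarᶜ : Finset (Fin m × Fin m)),
          {ω | θhat p.1 ω ≤ θhat p.2 ω} := by
      intro ω hω
      obtain ⟨j₂, hj₂T, hj₂S⟩ : ∃ j₂, j₂ ∈ That ω ∧ j₂ ∉ Tstar := by
        by_contra h
        push_neg at h
        exact hω (Finset.eq_of_subset_of_card_le h (by rw [hThatCard, hTcard]))
      obtain ⟨j₁, hj₁S, hj₁T⟩ : ∃ j₁, j₁ ∈ Tstar ∧ j₁ ∉ That ω := by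
        by_contra h
        push_neg at h
        exact hω ((Finset.eq_of_subset_of_card_le h (by rw [hThatCard, hTcard])).symm)
      have hp : ((j₁, j₂) : Fin m × Fin m) ∈ (Tstar ×ˢ Tstarᶜ : Finset (Fin m × Fin m)) :=
        Finset.mem_product.mpr ⟨hj₁S, Finset.mem_compl.mpr hj₂S⟩
      exact Set.mem_biUnion hp
        (show ω ∈ {ω | θhat ((j₁, j₂) : Fin m × Fin m).1 ω ≤ θhat ((j₁, j₂) : Fin m × Fin m).2 ω}
          from hThatTop ω j₂ hj₂T j₁ hj₁T)
    have hcard : (Tstar ×ˢ Tstarᶜ : Finset (Fin m × Fin m)).card = k * (m - k) := by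
      rw [Finset.card_product, Finset.card_compl, hTcard, Fintype.card_fin]
    calc ℙ {ω | That ω ≠ Tstar}
        ≤ ℙ (⋃ p ∈ (Tstar ×ˢ Tstarᶜ : Finset (Fin m × Fin m)),
            {ω | θhat p.1 ω ≤ θhat p.2 ω}) := measure_mono hsub
      _ ≤ ∑ p ∈ (Tstar ×ˢ Tstarᶜ : Finset (Fin m × Fin m)),
            ℙ {ω | θhat p.1 ω ≤ θhat p.2 ω} := measure_biUnion_finset_le _ _
      _ ≤ ∑ p ∈ (Tstar ×ˢ Tstarᶜ : Finset (Fin m × Fin m)), ENNReal.ofReal C :=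
            Finset.sum_le_sum fun p hp =>
              pair p.1 (Finset.mem_product.mp hp).1 p.2
                (Finset.mem_compl.mp (Finset.mem_product.mp hp).2)
      _ = (k * (m - k) : ℕ) * ENNReal.ofReal C := by
            rw [Finset.sum_const, hcard, nsmul_eq_mul]
      _ = ENNReal.ofReal ((k : ℝ) * ((m:ℝ) - k) * C) := by
            rw [← ENNReal.ofReal_natCast, ← ENNReal.ofReal_mul (by positivity)]
            congr 1
            push_cast [Nat.cast_sub hkm.le]
            ring
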